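/- Let a, b be natural numbers with a + 2b ≥ 1, set r = a + 2b, and let s be a real number with s ≤ 0. Then for every ε > 0 the function (x, y) ↦ (‖x‖⁴ + ‖y‖²)^((s − r)/4) is NOT integrable on the open ball of radius ε around the origin of ℝᵃ × ℝᵇ (with respect to Lebesgue measure). -/

import Mathlib

open MeasureTheory Metric Set
open scoped ENNReal

section Aux

instance auxHaarProd (a b : ℕ) :
    (volume : Measure (EuclideanSpace ℝ (Fin a) × EuclideanSpace ℝ (Fin b))).IsAddHaarMeasure :=
  Measure.prod.instIsAddHaarMeasure _ _

/-- The anisotropic "ball" `{N ≤ t}` written via the fourth power of the gauge. -/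
def gB (a b : ℕ) (t : ℝ) : Set (EuclideanSpace ℝ (Fin a) × EuclideanSpace ℝ (Fin b)) :=
  {p | ‖p.1‖ ^ 4 + ‖p.2‖ ^ 2 ≤ t ^ 4}

lemma measurable_gauge4 (a b : ℕ) :
    Measurable (fun p : EuclideanSpace ℝ (Fin a) × EuclideanSpace ℝ (Fin b) =>
      ‖p.1‖ ^ 4 + ‖p.2‖ ^ 2) := by fun_prop

lemma measurableSet_gB (a b : ℕ) (t : ℝ) : MeasurableSet (gB a b t) :=
  measurable_gauge4 a b measurableSet_Iic

lemma norm_le_of_mem_gB {a b : ℕ} {t : ℝ} (ht : 0 ≤ t)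
    {p : EuclideanSpace ℝ (Fin a) × EuclideanSpace ℝ (Fin b)} (hp : p ∈ gB a b t) :
    ‖p‖ ≤ max t (t ^ 2) := by
  have h1 : (0:ℝ) ≤ ‖p.1‖ ^ 2 := by positivity
  have h2 : (0:ℝ) ≤ ‖p.2‖ ^ 2 := by positivity
  have hp' : ‖p.1‖ ^ 4 + ‖p.2‖ ^ 2 ≤ t ^ 4 := hp
  have hx : ‖p.1‖ ≤ t := by
    refine le_of_pow_le_pow_left₀ (n := 4) (by norm_num) ht ?_
    nlinarith [norm_nonneg p.1]
  have hy : ‖p.2‖ ≤ t ^ 2 := by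
    refine le_of_pow_le_pow_left₀ (n := 2) (by norm_num) (by positivity) ?_
    calc ‖p.2‖ ^ 2 ≤ t ^ 4 := by nlinarith [norm_nonneg p.1]
      _ = (t ^ 2) ^ 2 := by ring
  have hmax : ‖p‖ = max ‖p.1‖ ‖p.2‖ := Prod.norm_def p
  rw [hmax]
  exact max_le_max hx hy

lemma gB_mono (a b : ℕ) {t₁ t₂ : ℝ} (h0 : 0 ≤ t₁) (h : t₁ ≤ t₂) : gB a b t₁ ⊆ gB a b t₂ := by
  intro p hp
  have : t₁ ^ 4 ≤ t₂ ^ 4 := pow_le_pow_left₀ h0 h 4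
  exact le_trans hp this

lemma gB_volume_pos (a b : ℕ) : 0 < volume (gB a b 1) := by
  refine lt_of_lt_of_le (measure_ball_pos volume (0 : EuclideanSpace ℝ (Fin a) × EuclideanSpace ℝ (Fin b)) (by norm_num : (0:ℝ) < 1/2)) (measure_mono ?_)
  intro p hp
  rw [mem_ball_zero_iff] at hp
  have h1 : ‖p.1‖ ≤ ‖p‖ := norm_fst_le p
  have h2 : ‖p.2‖ ≤ ‖p‖ := norm_snd_le p
  have hn : (0:ℝ) ≤ ‖p‖ := norm_nonneg p
  show ‖p.1‖ ^ 4 + ‖p.2‖ ^ 2 ≤ (1:ℝ) ^ 4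
  have hx : ‖p.1‖ ≤ 1/2 := le_of_lt (lt_of_le_of_lt h1 hp)
  have hy : ‖p.2‖ ≤ 1/2 := le_of_lt (lt_of_le_of_lt h2 hp)
  have e1 : ‖p.1‖ ^ 4 ≤ (1/2 : ℝ) ^ 4 := pow_le_pow_left₀ (norm_nonneg p.1) hx 4
  have e2 : ‖p.2‖ ^ 2 ≤ (1/2 : ℝ) ^ 2 := pow_le_pow_left₀ (norm_nonneg p.2) hy 2
  norm_num at e1 e2 ⊢
  linarith

lemma gB_volume_ne_top (a b : ℕ) {t : ℝ} (ht : 0 ≤ t) : volume (gB a b t) ≠ ∞ := by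
  refine ne_top_of_le_ne_top (measure_closedBall_lt_top (x := (0 : EuclideanSpace ℝ (Fin a) × EuclideanSpace ℝ (Fin b))) (r := max t (t^2))).ne (measure_mono ?_)
  intro p hp
  rw [mem_closedBall_zero_iff]
  exact norm_le_of_mem_gB ht hp

lemma smul_prod_smul_apply {α β : Type*} [MeasurableSpace α] [MeasurableSpace β]
    (μ : Measure α) (ν : Measure β) [SFinite μ] [SFinite ν] (c d : ℝ≥0∞) (hd : d ≠ ∞)
    {s : Set (α × β)} (hs : MeasurableSet s) :
    ((c • μ).prod (d • ν)) s = c * d * (μ.prod ν) s := by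
  rw [Measure.prod_apply hs, Measure.prod_apply hs]
  simp only [Measure.smul_apply, smul_eq_mul]
  rw [lintegral_smul_measure, lintegral_const_mul' _ _ hd]
  ring

lemma gB_volume_scaling (a b : ℕ) {t : ℝ} (ht : 0 < t) :
    volume (gB a b t) = ENNReal.ofReal (t ^ (a + 2 * b)) * volume (gB a b 1) := by
  have hf : Measurable fun x : EuclideanSpace ℝ (Fin a) => t • x := by fun_prop
  have hg : Measurable fun y : EuclideanSpace ℝ (Fin b) => (t ^ 2) • y := by fun_prop
  have habs : |t| = t := abs_of_pos ht
  have hpre : (Prod.map (fun x : EuclideanSpace ℝ (Fin a) => t • x)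
      (fun y : EuclideanSpace ℝ (Fin b) => (t ^ 2) • y)) ⁻¹' (gB a b t) = gB a b 1 := by
    ext p
    simp only [gB, Set.mem_preimage, Set.mem_setOf_eq, Prod.map_fst, Prod.map_snd,
      norm_smul, Real.norm_eq_abs, habs, abs_pow]
    have key : (t * ‖p.1‖) ^ 4 + (t ^ 2 * ‖p.2‖) ^ 2 = t ^ 4 * (‖p.1‖ ^ 4 + ‖p.2‖ ^ 2) := by ring
    rw [key, one_pow]
    exact mul_le_iff_le_one_right (by positivity)
  have h1 : volume (gB a b 1) =
      Measure.map (Prod.map (fun x : EuclideanSpace ℝ (Fin a) => t • x)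
        (fun y : EuclideanSpace ℝ (Fin b) => (t ^ 2) • y)) volume (gB a b t) := by
    rw [Measure.map_apply (hf.prodMap hg) (measurableSet_gB a b t), hpre]
  rw [Measure.volume_eq_prod, ← Measure.map_prod_map _ _ hf hg,
    Measure.map_addHaar_smul _ ht.ne', Measure.map_addHaar_smul _ (pow_ne_zero 2 ht.ne'),
    finrank_euclideanSpace_fin, finrank_euclideanSpace_fin,
    smul_prod_smul_apply _ _ _ _ ENNReal.ofReal_ne_top (measurableSet_gB a b t),
    ← Measure.volume_eq_prod] at h1
  have hpow : |(t ^ a)⁻¹| * |((t ^ 2) ^ b)⁻¹| = (t ^ (a + 2 * b))⁻¹ := by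
    rw [abs_of_pos (by positivity), abs_of_pos (by positivity), ← mul_inv, ← pow_mul, ← pow_add]
  rw [← ENNReal.ofReal_mul (by positivity), hpow] at h1
  rw [h1, ← mul_assoc, ← ENNReal.ofReal_mul (by positivity),
    mul_inv_cancel₀ (by positivity), ENNReal.ofReal_one, one_mul]

end Aux

/-- Lemma 1.1 (second half): for `r = a + 2b` and `s ≤ 0`, the gauge power
`N(x,y)^(s-r) = (‖x‖⁴ + ‖y‖²)^((s-r)/4)` is not integrable on any ball
around the origin of `ℝᵃ × ℝᵇ`. -/
theorem stmt1 (a b : ℕ) (hab : 1 ≤ a + 2 * b) (s : ℝ) (hs : s ≤ 0) :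
    ∀ ε : ℝ, 0 < ε →
      ¬ IntegrableOn
          (fun p : EuclideanSpace ℝ (Fin a) × EuclideanSpace ℝ (Fin b) =>
            (‖p.1‖ ^ 4 + ‖p.2‖ ^ 2) ^ ((s - (a + 2 * b : ℕ)) / 4))
          (Metric.ball 0 ε) volume := by
  intro ε hε h
  set R : ℕ := a + 2 * b with hR
  set e : ℝ := (s - (R : ℝ)) / 4 with he
  have hR1 : (1:ℝ) ≤ (R:ℝ) := by exact_mod_cast hab
  have h4e : 4 * e = s - (R:ℝ) := by rw [he]; ring
  -- the radius
  have hminpos : 0 < min ε 1 := lt_min hε one_pos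
  set δ : ℝ := min ε 1 / 2 with hδ
  have hδ0 : 0 < δ := by rw [hδ]; linarith
  have hδ1 : δ ≤ 1/2 := by
    have : min ε 1 ≤ 1 := min_le_right _ _
    rw [hδ]; linarith
  have hδε : δ < ε := by
    have : min ε 1 ≤ ε := min_le_left _ _
    rw [hδ]; linarith
  -- shells
  set lam : ℕ → ℝ := fun k => δ * (2:ℝ)⁻¹ ^ k with hlam
  have hlam0 : ∀ k, 0 < lam k := fun k => mul_pos hδ0 (pow_pos (by norm_num) k)
  have hlamδ : ∀ k, lam k ≤ δ := by
    intro k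
    have h1 : (2:ℝ)⁻¹ ^ k ≤ 1 := pow_le_one₀ (by norm_num) (by norm_num)
    calc lam k = δ * (2:ℝ)⁻¹ ^ k := rfl
      _ ≤ δ * 1 := by nlinarith
      _ = δ := mul_one δ
  have hlam1 : ∀ k, lam k ≤ 1 := fun k => le_trans (hlamδ k) (by linarith)
  have hlam_anti : ∀ j k, j ≤ k → lam k ≤ lam j := by
    intro j k hjk
    have : (2:ℝ)⁻¹ ^ k ≤ (2:ℝ)⁻¹ ^ j :=
      pow_le_pow_of_le_one (by norm_num) (by norm_num) hjk
    exact mul_le_mul_of_nonneg_left this hδ0.le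
  have hlam_succ : ∀ k, lam (k + 1) = lam k * 2⁻¹ := by
    intro k
    simp only [hlam, pow_succ]
    ring
  set S : ℕ → Set (EuclideanSpace ℝ (Fin a) × EuclideanSpace ℝ (Fin b)) :=
    fun k => gB a b (lam k) \ gB a b (lam (k + 1)) with hSdef
  have hSmeas : ∀ k, MeasurableSet (S k) :=
    fun k => (measurableSet_gB a b _).diff (measurableSet_gB a b _)
  -- disjointness
  have hdisj : Pairwise (Function.onFun Disjoint S) := by
    have key : ∀ j k, j < k → Disjoint (S j) (S k) := by
      intro j k hjk
      refine Set.disjoint_left.2 fun p hpj hpk => ?_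
      exact hpj.2 (gB_mono a b (hlam0 k).le (hlam_anti (j+1) k hjk) hpk.1)
    intro j k hjk
    rcases lt_or_gt_of_ne hjk with h' | h'
    · exact key j k h'
    · exact (key k j h').symm
  -- shells sit inside the ball
  have hSsub : ∀ k, S k ⊆ Metric.ball (0 : EuclideanSpace ℝ (Fin a) × EuclideanSpace ℝ (Fin b)) ε := by
    intro k p hp
    rw [mem_ball_zero_iff]
    have hn := norm_le_of_mem_gB (hlam0 k).le hp.1
    have hl1 : lam k ≤ δ := hlamδ k
    have hl2 : lam k ^ 2 ≤ δ := by nlinarith [hlam0 k, hlam1 k]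
    have : max (lam k) (lam k ^ 2) ≤ δ := max_le hl1 hl2
    linarith [le_trans hn this]
  -- volume lower bound for shells
  set v1 := volume (gB a b 1) with hv1
  have hv1pos : 0 < v1 := gB_volume_pos a b
  have hv1top : v1 ≠ ∞ := gB_volume_ne_top a b zero_le_one
  have hq : (0:ℝ) < 1 - (2:ℝ)⁻¹ ^ R := by
    have : (2:ℝ)⁻¹ ^ R ≤ (2:ℝ)⁻¹ ^ 1 :=
      pow_le_pow_of_le_one (by norm_num) (by norm_num) hab
    norm_num at this ⊢
    linarith
  have hvolS : ∀ k, ENNReal.ofReal (lam k ^ R * (1 - (2:ℝ)⁻¹ ^ R)) * v1 ≤ volume (S k) := by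
    intro k
    have h1 : volume (gB a b (lam k)) = ENNReal.ofReal (lam k ^ R) * v1 :=
      gB_volume_scaling a b (hlam0 k)
    have h2 : volume (gB a b (lam (k+1))) = ENNReal.ofReal (lam (k+1) ^ R) * v1 :=
      gB_volume_scaling a b (hlam0 (k+1))
    have hsucc : lam (k+1) ^ R = lam k ^ R * (2:ℝ)⁻¹ ^ R := by
      rw [hlam_succ k, mul_pow]
    have heq : ENNReal.ofReal (lam k ^ R * (1 - (2:ℝ)⁻¹ ^ R)) * v1
        = ENNReal.ofReal (lam k ^ R) * v1 - ENNReal.ofReal (lam (k+1) ^ R) * v1 := by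
      rw [← ENNReal.sub_mul (fun _ _ => hv1top), ← ENNReal.ofReal_sub _ (by positivity)]
      congr 2
      rw [hsucc]; ring
    rw [heq, ← h1, ← h2]
    exact le_measure_diff
  -- the lower bound constant
  set c : ℝ≥0∞ := ENNReal.ofReal (1 - (2:ℝ)⁻¹ ^ R) * v1 with hc
  have hc0 : c ≠ 0 := by
    rw [hc]
    exact mul_ne_zero (ENNReal.ofReal_pos.2 hq).ne' hv1pos.ne'
  -- pointwise lower bound & per-shell integral bound
  set f : EuclideanSpace ℝ (Fin a) × EuclideanSpace ℝ (Fin b) → ℝ :=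
    fun p => (‖p.1‖ ^ 4 + ‖p.2‖ ^ 2) ^ e with hf
  have hterm : ∀ k, c ≤ ∫⁻ p in S k, ENNReal.ofReal (f p) ∂volume := by
    intro k
    set X := lam k with hX
    have hX0 : 0 < X := hlam0 k
    have hX1 : X ≤ 1 := hlam1 k
    -- (X^4)^e * (X^R * (1 - q)) = X^s * (1-q) ≥ 1 - q
    have hpow4 : ((X ^ 4 : ℝ)) ^ e = X ^ (s - (R:ℝ)) := by
      rw [← Real.rpow_natCast X 4, ← Real.rpow_mul hX0.le]
      norm_num [h4e]
    have hpowR : (X ^ R : ℝ) = X ^ ((R:ℕ) : ℝ) := (Real.rpow_natCast X R).symm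
    have hmul : X ^ (s - (R:ℝ)) * X ^ ((R:ℕ):ℝ) = X ^ s := by
      rw [← Real.rpow_add hX0]
      norm_num
    have hXs : 1 ≤ X ^ s :=
      Real.one_le_rpow_of_pos_of_le_one_of_nonpos hX0 hX1 hs
    have hreal : (1 - (2:ℝ)⁻¹ ^ R) ≤ (X ^ 4) ^ e * (X ^ R * (1 - (2:ℝ)⁻¹ ^ R)) := by
      have : (X ^ 4 : ℝ) ^ e * (X ^ R) = X ^ s := by
        rw [hpow4, hpowR, hmul]
      calc (1 - (2:ℝ)⁻¹ ^ R) = 1 * (1 - (2:ℝ)⁻¹ ^ R) := (one_mul _).symm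
        _ ≤ X ^ s * (1 - (2:ℝ)⁻¹ ^ R) := by nlinarith
        _ = (X ^ 4) ^ e * (X ^ R * (1 - (2:ℝ)⁻¹ ^ R)) := by rw [← this]; ring
    have hstep1 : c ≤ ENNReal.ofReal ((X ^ 4) ^ e) * (ENNReal.ofReal (X ^ R * (1 - (2:ℝ)⁻¹ ^ R)) * v1) := by
      rw [hc, ← mul_assoc, ← ENNReal.ofReal_mul (by positivity)]
      exact mul_le_mul_left (ENNReal.ofReal_le_ofReal hreal) v1
    have hstep2 : ENNReal.ofReal ((X ^ 4) ^ e) * (ENNReal.ofReal (X ^ R * (1 - (2:ℝ)⁻¹ ^ R)) * v1)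
        ≤ ENNReal.ofReal ((X ^ 4) ^ e) * volume (S k) :=
      mul_le_mul_right (hvolS k) _
    have hstep3 : ENNReal.ofReal ((X ^ 4) ^ e) * volume (S k)
        ≤ ∫⁻ p in S k, ENNReal.ofReal (f p) ∂volume := by
      rw [← setLIntegral_const (S k) (ENNReal.ofReal ((X ^ 4) ^ e))]
      refine lintegral_mono_ae ?_
      filter_upwards [ae_restrict_mem (hSmeas k)] with p hp
      refine ENNReal.ofReal_le_ofReal ?_
      have hub : ‖p.1‖ ^ 4 + ‖p.2‖ ^ 2 ≤ X ^ 4 := hp.1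
      have hlb : 0 < ‖p.1‖ ^ 4 + ‖p.2‖ ^ 2 := by
        have hnot : ¬ (‖p.1‖ ^ 4 + ‖p.2‖ ^ 2 ≤ lam (k+1) ^ 4) := hp.2
        push_neg at hnot
        exact lt_of_le_of_lt (by positivity) hnot
      exact Real.rpow_le_rpow_of_nonpos hlb hub (by
        rw [he]
        have : s - (R:ℝ) ≤ -1 := by linarith
        linarith)
    exact hstep1.trans (hstep2.trans hstep3)
  -- conclude
  have htop : (⊤ : ℝ≥0∞) ≤ ∫⁻ p in Metric.ball 0 ε, ENNReal.ofReal (f p) ∂volume := by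
    calc (⊤ : ℝ≥0∞) = ∑' _ : ℕ, c := (ENNReal.tsum_const_eq_top_of_ne_zero hc0).symm
      _ ≤ ∑' k, ∫⁻ p in S k, ENNReal.ofReal (f p) ∂volume := ENNReal.tsum_le_tsum hterm
      _ = ∫⁻ p in ⋃ k, S k, ENNReal.ofReal (f p) ∂volume :=
          (lintegral_iUnion hSmeas hdisj _).symm
      _ ≤ ∫⁻ p in Metric.ball 0 ε, ENNReal.ofReal (f p) ∂volume :=
          lintegral_mono_set (Set.iUnion_subset hSsub)
  have hfin : ∫⁻ p in Metric.ball (0 : EuclideanSpace ℝ (Fin a) × EuclideanSpace ℝ (Fin b)) ε, (‖f p‖₊ : ℝ≥0∞) ∂volume < ∞ := h.2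
  have hchain : ∫⁻ p in Metric.ball (0 : EuclideanSpace ℝ (Fin a) × EuclideanSpace ℝ (Fin b)) ε, ENNReal.ofReal (f p) ∂volume
      ≤ ∫⁻ p in Metric.ball (0 : EuclideanSpace ℝ (Fin a) × EuclideanSpace ℝ (Fin b)) ε, (‖f p‖₊ : ℝ≥0∞) ∂volume :=
    lintegral_mono fun p => Real.ofReal_le_enorm _
  exact lt_irrefl ⊤ (lt_of_le_of_lt (htop.trans hchain) hfin)
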